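/- If N is a pure submodule of a right R-module T, then: if T is M-𝒜-flat, both N and T/N are M-𝒜-flat; and if T is strongly M-𝒜-flat, both N and T/N are strongly M-𝒜-flat. -/

import Mathlib

open TensorProduct MulOpposite CategoryTheory

universe u

section NC

variable (R : Type u) [Ring R]

/-- The defining relations of the tensor product `N ⊗[R] X` of a right `R`-module `N`
and a left `R`-module `X` over a (possibly noncommutative) ring `R`, inside `N ⊗[ℤ] X`. -/
def ncRel (N : Type u) [AddCommGroup N] [Module Rᵐᵒᵖ N]
    (X : Type u) [AddCommGroup X] [Module R X] : Submodule ℤ (N ⊗[ℤ] X) :=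
  Submodule.span ℤ {z | ∃ (r : R) (n : N) (x : X), z = (op r • n) ⊗ₜ[ℤ] x - n ⊗ₜ[ℤ] (r • x)}

/-- The tensor product `N ⊗[R] X` of a right `R`-module `N` and a left `R`-module `X`
over a (possibly noncommutative) ring `R`. -/
abbrev NCTensor (N : Type u) [AddCommGroup N] [Module Rᵐᵒᵖ N]
    (X : Type u) [AddCommGroup X] [Module R X] : Type u :=
  (N ⊗[ℤ] X) ⧸ ncRel R N X

/-- Functoriality of the tensor product in the left (right-module) variable. -/
noncomputable def ncMapL {N N' : Type u} [AddCommGroup N] [Module Rᵐᵒᵖ N]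
    [AddCommGroup N'] [Module Rᵐᵒᵖ N'] (g : N →ₗ[Rᵐᵒᵖ] N')
    (X : Type u) [AddCommGroup X] [Module R X] :
    NCTensor R N X →ₗ[ℤ] NCTensor R N' X :=
  Submodule.mapQ _ _ (LinearMap.rTensor X g.toAddMonoidHom.toIntLinearMap) (by
    rw [ncRel, Submodule.span_le]
    rintro _ ⟨r, n, x, rfl⟩
    show LinearMap.rTensor X g.toAddMonoidHom.toIntLinearMap ((op r • n) ⊗ₜ[ℤ] x - n ⊗ₜ[ℤ] (r • x)) ∈ ncRel R N' X
    simp only [SetLike.mem_coe, Submodule.mem_comap, map_sub, LinearMap.rTensor_tmul]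
    have h : g.toAddMonoidHom.toIntLinearMap (op r • n) =
        op r • g.toAddMonoidHom.toIntLinearMap n := by
      simp [map_smul]
    rw [h]
    exact Submodule.subset_span ⟨r, g n, x, rfl⟩)

/-- Functoriality of the tensor product in the right (left-module) variable. -/
noncomputable def ncMap (N : Type u) [AddCommGroup N] [Module Rᵐᵒᵖ N]
    {X Y : Type u} [AddCommGroup X] [Module R X] [AddCommGroup Y] [Module R Y]
    (f : X →ₗ[R] Y) : NCTensor R N X →ₗ[ℤ] NCTensor R N Y :=
  Submodule.mapQ _ _ (LinearMap.lTensor N f.toAddMonoidHom.toIntLinearMap) (by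
    rw [ncRel, Submodule.span_le]
    rintro _ ⟨r, n, x, rfl⟩
    show LinearMap.lTensor N f.toAddMonoidHom.toIntLinearMap ((op r • n) ⊗ₜ[ℤ] x - n ⊗ₜ[ℤ] (r • x)) ∈ ncRel R N Y
    simp only [SetLike.mem_coe, Submodule.mem_comap, map_sub, LinearMap.lTensor_tmul]
    have h : f.toAddMonoidHom.toIntLinearMap (r • x) =
        r • f.toAddMonoidHom.toIntLinearMap x := by
      simp [map_smul]
    rw [h]
    exact Submodule.subset_span ⟨r, n, f x, rfl⟩)

lemma ncMap_mk (N : Type u) [AddCommGroup N] [Module Rᵐᵒᵖ N]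
    {X Y : Type u} [AddCommGroup X] [Module R X] [AddCommGroup Y] [Module R Y]
    (f : X →ₗ[R] Y) (w : N ⊗[ℤ] X) :
    ncMap R N f (Submodule.Quotient.mk w) =
      Submodule.Quotient.mk (LinearMap.lTensor N f.toAddMonoidHom.toIntLinearMap w) := by
  unfold ncMap
  exact Submodule.mapQ_apply (p := ncRel R N X) (q := ncRel R N Y) (LinearMap.lTensor N f.toAddMonoidHom.toIntLinearMap) w

section lemmas

variable {R}
variable {X Y Z : Type u} [AddCommGroup X] [Module R X] [AddCommGroup Y] [Module R Y]
  [AddCommGroup Z] [Module R Z]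

lemma toInt_id : ((LinearMap.id : X →ₗ[R] X).toAddMonoidHom).toIntLinearMap =
    (LinearMap.id : X →ₗ[ℤ] X) := rfl

lemma toInt_comp (f : X →ₗ[R] Y) (g : Y →ₗ[R] Z) :
    ((g ∘ₗ f).toAddMonoidHom).toIntLinearMap =
      g.toAddMonoidHom.toIntLinearMap ∘ₗ f.toAddMonoidHom.toIntLinearMap := rfl

lemma toInt_add (f g : X →ₗ[R] Y) :
    ((f + g).toAddMonoidHom).toIntLinearMap =
      f.toAddMonoidHom.toIntLinearMap + g.toAddMonoidHom.toIntLinearMap := rfl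

end lemmas

/-- The functor `N ⊗[R] - : R-Mod ⥤ Ab` for a right `R`-module `N`. -/
noncomputable def ncTensorFunctor (N : Type u) [AddCommGroup N] [Module Rᵐᵒᵖ N] :
    ModuleCat.{u} R ⥤ ModuleCat.{u} ℤ where
  obj X := ModuleCat.of ℤ (NCTensor R N X)
  map {X Y} f := ModuleCat.ofHom (ncMap R N f.hom)
  map_id X := by
    refine ModuleCat.hom_ext (LinearMap.ext fun z => ?_)
    obtain ⟨w, rfl⟩ := Submodule.Quotient.mk_surjective _ z
    show ncMap R N (LinearMap.id : X →ₗ[R] X) _ = _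
    rw [ncMap_mk, toInt_id, LinearMap.lTensor_id]
    rfl
  map_comp {X Y Z} f g := by
    refine ModuleCat.hom_ext (LinearMap.ext fun z => ?_)
    obtain ⟨w, rfl⟩ := Submodule.Quotient.mk_surjective _ z
    show ncMap R N (g.hom ∘ₗ f.hom) (Submodule.Quotient.mk w) = ncMap R N g.hom (ncMap R N f.hom (Submodule.Quotient.mk w))
    rw [ncMap_mk, ncMap_mk, ncMap_mk, toInt_comp, LinearMap.lTensor_comp]
    rfl

instance ncTensorFunctor_additive (N : Type u) [AddCommGroup N] [Module Rᵐᵒᵖ N] :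
    (ncTensorFunctor R N).Additive where
  map_add {X Y f g} := by
    refine ModuleCat.hom_ext (LinearMap.ext fun z => ?_)
    obtain ⟨w, rfl⟩ := Submodule.Quotient.mk_surjective _ z
    show ncMap R N (f.hom + g.hom) (Submodule.Quotient.mk w) = ncMap R N f.hom (Submodule.Quotient.mk w) + ncMap R N g.hom (Submodule.Quotient.mk w)
    rw [ncMap_mk, ncMap_mk, ncMap_mk, toInt_add, LinearMap.lTensor_add]
    rfl

/-- `Tor₁^R(N, Z)` for a right `R`-module `N` and a left `R`-module `Z`, defined as the value at
`Z` of the first left derived functor of the functor `N ⊗[R] -`. -/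
noncomputable def ncTor1 (N : Type u) [AddCommGroup N] [Module Rᵐᵒᵖ N]
    (Z : Type u) [AddCommGroup Z] [Module R Z] : ModuleCat.{u} ℤ :=
  (((ncTensorFunctor R N).leftDerived 1).obj (ModuleCat.of R Z))

/-- `Tor₁^R(N, Z) = 0`. -/
def Tor1IsZero (N : Type u) [AddCommGroup N] [Module Rᵐᵒᵖ N]
    (Z : Type u) [AddCommGroup Z] [Module R Z] : Prop :=
  Limits.IsZero (ncTor1 R N Z)

/-- `Ext¹_R(Z, T) = 0`, where `Ext` is the derived functor of `Hom` on the category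
of left `R`-modules. -/
def Ext1IsZero (Z T : Type u) [AddCommGroup Z] [Module R Z] [AddCommGroup T] [Module R T] :
    Prop :=
  Limits.IsZero ((((Ext ℤ (ModuleCat.{u} R) 1).obj (Opposite.op (ModuleCat.of R Z))).obj
    (ModuleCat.of R T)))

end NC

open MulOpposite


section Char

variable (R : Type u) [Ring R]

/-- The right `R`-module structure on the character module `A⁺ = Hom_ℤ(A, ℚ/ℤ)` of a left
`R`-module `A`, given by `(c • r) (a) = c (r • a)`. -/
instance charModuleRight (A : Type u) [AddCommGroup A] [Module R A] :
    Module Rᵐᵒᵖ (CharacterModule A) where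
  smul r c := (c.comp (DistribMulAction.toAddMonoidHom A r.unop) : A →+ _)
  one_smul c := DFunLike.ext _ _ fun a => congrArg c (one_smul R a)
  mul_smul r s c := DFunLike.ext _ _ fun a => congrArg c (mul_smul s.unop r.unop a)
  smul_zero r := rfl
  smul_add r c c' := rfl
  add_smul r s c := DFunLike.ext _ _ fun a => by
    show c ((r.unop + s.unop) • a) = c (r.unop • a) + c (s.unop • a)
    rw [add_smul, map_add]
  zero_smul c := DFunLike.ext _ _ fun a => by
    show c ((0 : R) • a) = 0
    rw [zero_smul, map_zero]

/-- The left `R`-module structure on the character module `N⁺ = Hom_ℤ(N, ℚ/ℤ)` of a right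
`R`-module `N`, given by `(r • c) (n) = c (n • r)`. -/
instance charModuleLeft (N : Type u) [AddCommGroup N] [Module Rᵐᵒᵖ N] :
    Module R (CharacterModule N) where
  smul r c := (c.comp (DistribMulAction.toAddMonoidHom N (op r)) : N →+ _)
  one_smul c := DFunLike.ext _ _ fun n => congrArg c (one_smul Rᵐᵒᵖ n)
  mul_smul r s c := DFunLike.ext _ _ fun n => congrArg c (mul_smul (op s) (op r) n)
  smul_zero r := rfl
  smul_add r c c' := rfl
  add_smul r s c := DFunLike.ext _ _ fun n => by
    show c ((op r + op s) • n) = c (op r • n) + c (op s • n)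
    rw [add_smul, map_add]
  zero_smul c := DFunLike.ext _ _ fun n => by
    show c ((0 : Rᵐᵒᵖ) • n) = 0
    rw [zero_smul, map_zero]

end Char

section Classes

variable (R : Type u) [Ring R] (M : Type u) [AddCommGroup M] [Module R M]

/-- `T` is `M`-`𝒜`-injective if, for every `A ∈ 𝒜`, every homomorphism `A → T` extends to `M`,
i.e. the restriction map `Hom(M, T) → Hom(A, T)` is surjective. -/
def MAInjective (𝒜 : Set (Submodule R M)) (T : Type u) [AddCommGroup T] [Module R T] : Prop :=
  ∀ A ∈ 𝒜, ∀ f : (↥A) →ₗ[R] T, ∃ g : M →ₗ[R] T, g ∘ₗ A.subtype = f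

/-- `T` is strongly `M`-`𝒜`-injective if `Ext¹_R(M/A, T) = 0` for all `A ∈ 𝒜`. -/
def SMAInjective (𝒜 : Set (Submodule R M)) (T : Type u) [AddCommGroup T] [Module R T] : Prop :=
  ∀ A ∈ 𝒜, Ext1IsZero R (M ⧸ A) T

/-- A right `R`-module `N` is `M`-`𝒜`-flat if `N ⊗ A → N ⊗ M` is injective for all `A ∈ 𝒜`. -/
def MAFlat (𝒜 : Set (Submodule R M)) (N : Type u) [AddCommGroup N] [Module Rᵐᵒᵖ N] : Prop :=
  ∀ A ∈ 𝒜, Function.Injective (ncMap R N A.subtype)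

/-- A right `R`-module `N` is strongly `M`-`𝒜`-flat if `Tor₁^R(N, M/A) = 0` for all `A ∈ 𝒜`. -/
def SMAFlat (𝒜 : Set (Submodule R M)) (N : Type u) [AddCommGroup N] [Module Rᵐᵒᵖ N] : Prop :=
  ∀ A ∈ 𝒜, Tor1IsZero R N (M ⧸ A)

end Classes

section Flat

variable (R : Type u) [Ring R]

/-- A left `R`-module `Z` is flat if tensoring with it preserves injectivity of morphisms of
right `R`-modules. -/
def FlatLeftModule (Z : Type u) [AddCommGroup Z] [Module R Z] : Prop :=
  ∀ (N N' : Type u) [AddCommGroup N] [Module Rᵐᵒᵖ N] [AddCommGroup N'] [Module Rᵐᵒᵖ N']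
    (g : N' →ₗ[Rᵐᵒᵖ] N), Function.Injective g → Function.Injective (ncMapL R g Z)

end Flat


section Aux

variable {R : Type u} [Ring R]

section maps

variable {N N' N'' : Type u} [AddCommGroup N] [Module Rᵐᵒᵖ N]
  [AddCommGroup N'] [Module Rᵐᵒᵖ N'] [AddCommGroup N''] [Module Rᵐᵒᵖ N'']
  {X Y Z : Type u} [AddCommGroup X] [Module R X] [AddCommGroup Y] [Module R Y]
  [AddCommGroup Z] [Module R Z]

lemma ncMapL_mk (g : N →ₗ[Rᵐᵒᵖ] N') (w : N ⊗[ℤ] X) :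
    ncMapL R g X (Submodule.Quotient.mk w) =
      Submodule.Quotient.mk (LinearMap.rTensor X g.toAddMonoidHom.toIntLinearMap w) := by
  unfold ncMapL
  exact Submodule.mapQ_apply (p := ncRel R N X) (q := ncRel R N' X)
    (LinearMap.rTensor X g.toAddMonoidHom.toIntLinearMap) w

lemma ncMap_comp_apply (f : X →ₗ[R] Y) (g : Y →ₗ[R] Z) (z : NCTensor R N X) :
    ncMap R N (g ∘ₗ f) z = ncMap R N g (ncMap R N f z) := by
  obtain ⟨w, rfl⟩ := Submodule.Quotient.mk_surjective _ z
  rw [ncMap_mk, ncMap_mk, ncMap_mk, toInt_comp, LinearMap.lTensor_comp, LinearMap.comp_apply]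

lemma ncMap_zero_apply (z : NCTensor R N X) : ncMap R N (0 : X →ₗ[R] Y) z = 0 := by
  obtain ⟨w, rfl⟩ := Submodule.Quotient.mk_surjective _ z
  rw [ncMap_mk]
  have h : ((0 : X →ₗ[R] Y).toAddMonoidHom).toIntLinearMap = 0 := rfl
  rw [h, LinearMap.lTensor_zero, LinearMap.zero_apply]
  rfl

lemma ncMapL_comp_apply (g : N →ₗ[Rᵐᵒᵖ] N') (g' : N' →ₗ[Rᵐᵒᵖ] N'') (z : NCTensor R N X) :
    ncMapL R (g' ∘ₗ g) X z = ncMapL R g' X (ncMapL R g X z) := by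
  obtain ⟨w, rfl⟩ := Submodule.Quotient.mk_surjective _ z
  have h : ((g' ∘ₗ g).toAddMonoidHom).toIntLinearMap =
      g'.toAddMonoidHom.toIntLinearMap ∘ₗ g.toAddMonoidHom.toIntLinearMap := rfl
  rw [ncMapL_mk, ncMapL_mk, ncMapL_mk, h, LinearMap.rTensor_comp, LinearMap.comp_apply]

lemma ncMapL_zero_apply (z : NCTensor R N X) : ncMapL R (0 : N →ₗ[Rᵐᵒᵖ] N') X z = 0 := by
  obtain ⟨w, rfl⟩ := Submodule.Quotient.mk_surjective _ z
  rw [ncMapL_mk]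
  have h : ((0 : N →ₗ[Rᵐᵒᵖ] N').toAddMonoidHom).toIntLinearMap = 0 := rfl
  rw [h, LinearMap.rTensor_zero, LinearMap.zero_apply]
  rfl

lemma ncMap_ncMapL (g : N →ₗ[Rᵐᵒᵖ] N') (f : X →ₗ[R] Y) (z : NCTensor R N X) :
    ncMapL R g Y (ncMap R N f z) = ncMap R N' f (ncMapL R g X z) := by
  obtain ⟨w, rfl⟩ := Submodule.Quotient.mk_surjective _ z
  rw [ncMap_mk, ncMapL_mk, ncMapL_mk, ncMap_mk, ← LinearMap.comp_apply, ← LinearMap.comp_apply,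
    LinearMap.rTensor_comp_lTensor, LinearMap.lTensor_comp_rTensor]

lemma ncMap_surjective (f : X →ₗ[R] Y) (hf : Function.Surjective f) :
    Function.Surjective (ncMap R N f) := by
  intro z
  obtain ⟨w, rfl⟩ := Submodule.Quotient.mk_surjective _ z
  obtain ⟨v, hv⟩ := LinearMap.lTensor_surjective N
    (g := f.toAddMonoidHom.toIntLinearMap) hf w
  exact ⟨Submodule.Quotient.mk v, by rw [ncMap_mk, hv]⟩

lemma ncMapL_surjective (g : N →ₗ[Rᵐᵒᵖ] N') (hg : Function.Surjective g) :
    Function.Surjective (ncMapL R g X) := by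
  intro z
  obtain ⟨w, rfl⟩ := Submodule.Quotient.mk_surjective _ z
  obtain ⟨v, hv⟩ := LinearMap.rTensor_surjective X
    (g := g.toAddMonoidHom.toIntLinearMap) hg w
  exact ⟨Submodule.Quotient.mk v, by rw [ncMapL_mk, hv]⟩

lemma ncRel_le_map (g : Y →ₗ[R] Z) (hg : Function.Surjective g) :
    ncRel R N Z ≤ (ncRel R N Y).map (LinearMap.lTensor N g.toAddMonoidHom.toIntLinearMap) := by
  refine Submodule.span_le.2 ?_
  rintro _ ⟨r, n, z, rfl⟩
  obtain ⟨y, rfl⟩ := hg z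
  refine Submodule.mem_map.2 ⟨(op r • n) ⊗ₜ[ℤ] y - n ⊗ₜ[ℤ] (r • y),
    Submodule.subset_span ⟨r, n, y, rfl⟩, ?_⟩
  simp [map_sub, LinearMap.lTensor_tmul, map_smul]

lemma ncRelL_le_map (g : N →ₗ[Rᵐᵒᵖ] N') (hg : Function.Surjective g) :
    ncRel R N' X ≤ (ncRel R N X).map (LinearMap.rTensor X g.toAddMonoidHom.toIntLinearMap) := by
  refine Submodule.span_le.2 ?_
  rintro _ ⟨r, n', x, rfl⟩
  obtain ⟨n, rfl⟩ := hg n'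
  refine Submodule.mem_map.2 ⟨(op r • n) ⊗ₜ[ℤ] x - n ⊗ₜ[ℤ] (r • x),
    Submodule.subset_span ⟨r, n, x, rfl⟩, ?_⟩
  simp [map_sub, LinearMap.rTensor_tmul, map_smul]

lemma ncMap_exact (f : X →ₗ[R] Y) (g : Y →ₗ[R] Z) (hfg : Function.Exact f g)
    (hg : Function.Surjective g) :
    Function.Exact (ncMap R N f) (ncMap R N g) := by
  have hZ : Function.Exact (LinearMap.lTensor N f.toAddMonoidHom.toIntLinearMap)
      (LinearMap.lTensor N g.toAddMonoidHom.toIntLinearMap) :=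
    lTensor_exact N hfg hg
  intro z
  constructor
  · intro hz
    obtain ⟨w, rfl⟩ := Submodule.Quotient.mk_surjective _ z
    rw [ncMap_mk, Submodule.Quotient.mk_eq_zero] at hz
    obtain ⟨s, hs, hsw⟩ := ncRel_le_map g hg hz
    have h0 : LinearMap.lTensor N g.toAddMonoidHom.toIntLinearMap (w - s) = 0 := by
      rw [map_sub, hsw, sub_self]
    obtain ⟨v, hv⟩ := (hZ _).1 h0
    refine ⟨Submodule.Quotient.mk v, ?_⟩
    rw [ncMap_mk, hv]
    exact (Submodule.Quotient.eq _).2 (by rw [sub_sub_cancel_left]; exact neg_mem hs)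
  · rintro ⟨v, rfl⟩
    rw [← ncMap_comp_apply]
    have h : g ∘ₗ f = 0 := LinearMap.ext fun x => hfg.apply_apply_eq_zero x
    rw [h]
    exact ncMap_zero_apply v

lemma ncMapL_exact (g : N →ₗ[Rᵐᵒᵖ] N') (g' : N' →ₗ[Rᵐᵒᵖ] N'') (hfg : Function.Exact g g')
    (hg : Function.Surjective g') :
    Function.Exact (ncMapL R g X) (ncMapL R g' X) := by
  have hZ : Function.Exact (LinearMap.rTensor X g.toAddMonoidHom.toIntLinearMap)
      (LinearMap.rTensor X g'.toAddMonoidHom.toIntLinearMap) :=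
    rTensor_exact X hfg hg
  intro z
  constructor
  · intro hz
    obtain ⟨w, rfl⟩ := Submodule.Quotient.mk_surjective _ z
    rw [ncMapL_mk, Submodule.Quotient.mk_eq_zero] at hz
    obtain ⟨s, hs, hsw⟩ := ncRelL_le_map g' hg hz
    have h0 : LinearMap.rTensor X g'.toAddMonoidHom.toIntLinearMap (w - s) = 0 := by
      rw [map_sub, hsw, sub_self]
    obtain ⟨v, hv⟩ := (hZ _).1 h0
    refine ⟨Submodule.Quotient.mk v, ?_⟩
    rw [ncMapL_mk, hv]
    exact (Submodule.Quotient.eq _).2 (by rw [sub_sub_cancel_left]; exact neg_mem hs)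
  · rintro ⟨v, rfl⟩
    rw [← ncMapL_comp_apply]
    have h : g' ∘ₗ g = 0 := LinearMap.ext fun x => hfg.apply_apply_eq_zero x
    rw [h]
    exact ncMapL_zero_apply v

end maps

universe v' u'

lemma sc_exact_iff_function_exact {R' : Type u'} [Ring R']
    (S : ShortComplex (ModuleCat.{v'} R')) :
    S.Exact ↔ Function.Exact S.f S.g := by
  rw [S.moduleCat_exact_iff_range_eq_ker, LinearMap.exact_iff]
  exact eq_comm

lemma tor1_iff (W : Type u) [AddCommGroup W] [Module Rᵐᵒᵖ W]
    (Z : Type u) [AddCommGroup Z] [Module R Z]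
    (P : CategoryTheory.ProjectiveResolution (ModuleCat.of R Z)) :
    Tor1IsZero R W Z ↔
      Function.Exact (ncMap R W (P.complex.d 2 1).hom) (ncMap R W (P.complex.d 1 0).hom) := by
  have e := P.isoLeftDerivedObj (ncTensorFunctor R W) 1
  set K := ((ncTensorFunctor R W).mapHomologicalComplex (ComplexShape.down ℕ)).obj P.complex
    with hK
  have h1 : Tor1IsZero R W Z ↔ Limits.IsZero (K.homology 1) :=
    ⟨fun h => Limits.IsZero.of_iso h e.symm, fun h => Limits.IsZero.of_iso h e⟩
  rw [h1, ← HomologicalComplex.exactAt_iff_isZero_homology,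
    HomologicalComplex.exactAt_iff' K 2 1 0 (by simp) (by simp)]
  exact sc_exact_iff_function_exact (R' := ℤ) (K.sc' 2 1 0)

end Aux

/-- If `N` is a pure submodule of a right `R`-module `T`, then: if `T` is `M`-`𝒜`-flat, so are
`N` and `T/N`; and if `T` is strongly `M`-`𝒜`-flat, so are `N` and `T/N`. -/
theorem stmt9 (R : Type u) [Ring R] (M : Type u) [AddCommGroup M] [Module R M]
    (𝒜 : Set (Submodule R M)) (T : Type u) [AddCommGroup T] [Module Rᵐᵒᵖ T]
    (N : Submodule Rᵐᵒᵖ T)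
    (hpure : ∀ (X : Type u) [AddCommGroup X] [Module R X],
      Function.Injective (ncMapL R N.subtype X)) :
    (MAFlat R M 𝒜 T → MAFlat R M 𝒜 (↥N) ∧ MAFlat R M 𝒜 (T ⧸ N)) ∧
    (SMAFlat R M 𝒜 T → SMAFlat R M 𝒜 (↥N) ∧ SMAFlat R M 𝒜 (T ⧸ N)) := by
  have hjσ : Function.Exact N.subtype N.mkQ := by
    rw [LinearMap.exact_iff, Submodule.ker_mkQ, Submodule.range_subtype]
  have hσ : Function.Surjective N.mkQ := Submodule.mkQ_surjective N
  have hσj : N.mkQ ∘ₗ N.subtype = 0 :=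
    LinearMap.ext fun x => (Submodule.Quotient.mk_eq_zero N).2 x.2
  constructor
  · -- MAFlat part
    intro hT
    constructor
    · intro A hA
      have hTi := hT A hA
      refine LinearMap.ker_eq_bot.1 (LinearMap.ker_eq_bot'.2 fun z hz => ?_)
      have h1 : ncMap R T A.subtype (ncMapL R N.subtype (↥A) z) = 0 := by
        rw [← ncMap_ncMapL, hz, map_zero]
      have h2 : ncMapL R N.subtype (↥A) z = 0 :=
        hTi (by rw [h1, map_zero])
      exact hpure (↥A) (by rw [h2, map_zero])
    · intro A hA
      have hTi := hT A hA
      refine LinearMap.ker_eq_bot.1 (LinearMap.ker_eq_bot'.2 fun z hz => ?_)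
      obtain ⟨w, rfl⟩ := ncMapL_surjective N.mkQ hσ z
      have h1 : ncMapL R N.mkQ M (ncMap R T A.subtype w) = 0 := by
        rw [ncMap_ncMapL]; exact hz
      obtain ⟨u, hu⟩ := ((ncMapL_exact N.subtype N.mkQ hjσ hσ) _).1 h1
      have h2 : ncMapL R N.subtype (M ⧸ A) (ncMap R (↥N) A.mkQ u) = 0 := by
        rw [ncMap_ncMapL, hu, ← ncMap_comp_apply,
          (LinearMap.ext fun x => (Submodule.Quotient.mk_eq_zero A).2 x.2 :
            A.mkQ ∘ₗ A.subtype = 0)]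
        exact ncMap_zero_apply w
      have h3 : ncMap R (↥N) A.mkQ u = 0 := hpure (M ⧸ A) (by rw [h2, map_zero])
      have hAex : Function.Exact A.subtype A.mkQ := by
        rw [LinearMap.exact_iff, Submodule.ker_mkQ, Submodule.range_subtype]
      obtain ⟨v, hv⟩ := ((ncMap_exact A.subtype A.mkQ hAex (Submodule.mkQ_surjective A)) u).1 h3
      have h4 : ncMap R T A.subtype (ncMapL R N.subtype (↥A) v) = ncMap R T A.subtype w := by
        rw [← ncMap_ncMapL, hv, hu]
      have h5 := hTi h4
      rw [← h5, ← ncMapL_comp_apply, hσj]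
      exact ncMapL_zero_apply v
  · -- SMAFlat part
    intro hT
    have key : ∀ A ∈ 𝒜, Tor1IsZero R (↥N) (M ⧸ A) ∧ Tor1IsZero R (T ⧸ N) (M ⧸ A) := by
      intro A hA
      obtain ⟨P⟩ : Nonempty (CategoryTheory.ProjectiveResolution (ModuleCat.of R (M ⧸ A))) :=
        CategoryTheory.HasProjectiveResolution.out
      set d21 : (P.complex.X 2) →ₗ[R] (P.complex.X 1) := (P.complex.d 2 1).hom with hd21def
      set d10 : (P.complex.X 1) →ₗ[R] (P.complex.X 0) := (P.complex.d 1 0).hom with hd10def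
      have hd : d10 ∘ₗ d21 = 0 := congrArg ModuleCat.Hom.hom (P.complex.d_comp_d 2 1 0)
      have hres1 : Function.Exact d21 d10 :=
        (sc_exact_iff_function_exact _).1 (P.exact_succ 0)
      have hTex : Function.Exact (ncMap R T d21) (ncMap R T d10) :=
        (tor1_iff T (M ⧸ A) P).1 (hT A hA)
      set π₀ : (P.complex.X 0) →ₗ[R] (M ⧸ A) := (P.π.f 0).hom with hπ₀def
      have hres0 : Function.Exact d10 π₀ :=
        (sc_exact_iff_function_exact _).1 P.exact₀
      have hπ₀ : Function.Surjective π₀ :=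
        (ModuleCat.epi_iff_surjective (P.π.f 0)).1 inferInstance
      -- the image of d10 and the factorization
      have hei : (LinearMap.range d10).subtype ∘ₗ d10.rangeRestrict = d10 :=
        LinearMap.ext fun x => rfl
      have he : Function.Surjective d10.rangeRestrict := LinearMap.surjective_rangeRestrict _
      have hd21e : ∀ x, d10.rangeRestrict (d21 x) = 0 := fun x => Subtype.ext (by
        show d10 (d21 x) = 0
        exact LinearMap.congr_fun hd x)
      have hexNe : Function.Exact d21 d10.rangeRestrict := by
        intro y
        constructor
        · intro hy
          refine (hres1 y).1 ?_
          have := congrArg ((LinearMap.range d10).subtype) hy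
          simpa using this
        · rintro ⟨x, rfl⟩
          exact hd21e x
      -- injectivity of T ⊗ (range d10 → P₀)
      have hTi : Function.Injective (ncMap R T (LinearMap.range d10).subtype) := by
        refine LinearMap.ker_eq_bot.1 (LinearMap.ker_eq_bot'.2 fun u hu => ?_)
        obtain ⟨w, rfl⟩ := ncMap_surjective d10.rangeRestrict he u
        have h0 : ncMap R T d10 w = 0 := by
          rw [← hei, ncMap_comp_apply]; exact hu
        obtain ⟨v, hv⟩ := (hTex w).1 h0
        rw [← hv, ← ncMap_comp_apply,
          (LinearMap.ext hd21e : d10.rangeRestrict ∘ₗ d21 = 0)]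
        exact ncMap_zero_apply v
      -- injectivity of N ⊗ (range d10 → P₀) via purity
      have hNi : Function.Injective (ncMap R (↥N) (LinearMap.range d10).subtype) := by
        refine LinearMap.ker_eq_bot.1 (LinearMap.ker_eq_bot'.2 fun u hu => ?_)
        have h1 : ncMap R T (LinearMap.range d10).subtype
            (ncMapL R N.subtype _ u) = 0 := by
          rw [← ncMap_ncMapL, hu, map_zero]
        have h2 : ncMapL R N.subtype _ u = 0 := hTi (by rw [h1, map_zero])
        exact hpure _ (by rw [h2, map_zero])
      -- Tor₁(N, M/A) = 0
      have hNex : Function.Exact (ncMap R (↥N) d21) (ncMap R (↥N) d10) := by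
        intro z
        constructor
        · intro hz
          have hez : ncMap R (↥N) d10.rangeRestrict z = 0 := hNi (by
            rw [← ncMap_comp_apply, hei, hz, map_zero])
          exact ((ncMap_exact d21 d10.rangeRestrict hexNe he) z).1 hez
        · rintro ⟨v, rfl⟩
          rw [← ncMap_comp_apply, hd]
          exact ncMap_zero_apply v
      -- Tor₁(T/N, M/A) = 0
      have hQex : Function.Exact (ncMap R (T ⧸ N) d21) (ncMap R (T ⧸ N) d10) := by
        intro z
        constructor
        · intro hz
          obtain ⟨w, rfl⟩ := ncMapL_surjective N.mkQ hσ z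
          have h1 : ncMapL R N.mkQ _ (ncMap R T d10 w) = 0 := by
            rw [ncMap_ncMapL]; exact hz
          obtain ⟨u, hu⟩ := ((ncMapL_exact N.subtype N.mkQ hjσ hσ) _).1 h1
          have h2 : ncMapL R N.subtype _ (ncMap R (↥N) π₀ u) = 0 := by
            rw [ncMap_ncMapL, hu, ← ncMap_comp_apply,
              (LinearMap.ext fun x => hres0.apply_apply_eq_zero x : π₀ ∘ₗ d10 = 0)]
            exact ncMap_zero_apply w
          have h3 : ncMap R (↥N) π₀ u = 0 := hpure _ (by rw [h2, map_zero])
          obtain ⟨v, hv⟩ := ((ncMap_exact d10 π₀ hres0 hπ₀) u).1 h3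
          have h4 : ncMap R T d10 (w - ncMapL R N.subtype _ v) = 0 := by
            rw [map_sub, ← ncMap_ncMapL, hv, hu, sub_self]
          obtain ⟨s, hs⟩ := (hTex _).1 h4
          refine ⟨ncMapL R N.mkQ _ s, ?_⟩
          rw [← ncMap_ncMapL, hs, map_sub, ← ncMapL_comp_apply, hσj,
            ncMapL_zero_apply, sub_zero]
        · rintro ⟨v, rfl⟩
          rw [← ncMap_comp_apply, hd]
          exact ncMap_zero_apply v
      exact ⟨(tor1_iff (↥N) (M ⧸ A) P).2 hNex, (tor1_iff (T ⧸ N) (M ⧸ A) P).2 hQex⟩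
    exact ⟨fun A hA => (key A hA).1, fun A hA => (key A hA).2⟩
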